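/- arXiv:0709.3999 — 3 statements merged into one kernel-verified Lean document; each statement's English description precedes it below -/
import Mathlib

section
/- Let X be a scheme and A, B closed subschemes with a map A ⊔ B → X such that A → X and B → X are closed embeddings and the map is scheme-theoretically surjective (X = A ∪ B). Let C = A ∩ B (scheme-theoretic intersection). Then X, together with the inclusions of A and B, is determined up to unique isomorphism by the data of C as a closed subscheme of A and of B. -/
theorem key_aux (R : Type*) [CommRing R] (IA IB : Ideal R) (h : IA ⊓ IB = ⊥)
    (T : Type*) [CommRing T] (a : T →+* R ⧸ IA) (b : T →+* R ⧸ IB)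
    (hab : (Ideal.Quotient.factor (show IA ≤ IA + IB from le_sup_left)).comp a =
        (Ideal.Quotient.factor (show IB ≤ IA + IB from le_sup_right)).comp b) :
    ∀ t : T, ∃! r : R, Ideal.Quotient.mk IA r = a t ∧ Ideal.Quotient.mk IB r = b t := by
  intro t
  obtain ⟨r1, hr1⟩ := Ideal.Quotient.mk_surjective (I := IA) (a t)
  obtain ⟨r2, hr2⟩ := Ideal.Quotient.mk_surjective (I := IB) (b t)
  have h12 : r1 - r2 ∈ IA + IB := by
    have := congrArg (fun f => f t) hab
    simp only [RingHom.comp_apply] at this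
    rw [← hr1, ← hr2] at this
    have : Ideal.Quotient.mk (IA + IB) r1 = Ideal.Quotient.mk (IA + IB) r2 := this
    exact (Ideal.Quotient.mk_eq_mk_iff_sub_mem _ _).mp this
  obtain ⟨x, hx, y, hy, hxy⟩ := Submodule.mem_sup.mp h12
  refine ⟨r1 - x, ⟨?_, ?_⟩, ?_⟩
  · rw [map_sub, Ideal.Quotient.eq_zero_iff_mem.mpr hx, sub_zero, hr1]
  · have : r1 - x = r2 + y := by linear_combination -hxy
    rw [this, map_add, Ideal.Quotient.eq_zero_iff_mem.mpr hy, add_zero, hr2]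
  · rintro r ⟨ha, hb⟩
    have hA : r - (r1 - x) ∈ IA := by
      rw [← Ideal.Quotient.eq_zero_iff_mem, map_sub, ha, map_sub,
        Ideal.Quotient.eq_zero_iff_mem.mpr hx, sub_zero, hr1, sub_self]
    have hB : r - (r1 - x) ∈ IB := by
      have e : r1 - x = r2 + y := by linear_combination -hxy
      rw [← Ideal.Quotient.eq_zero_iff_mem, map_sub, hb, e, map_add,
        Ideal.Quotient.eq_zero_iff_mem.mpr hy, add_zero, hr2, sub_self]
    have : r - (r1 - x) ∈ IA ⊓ IB := ⟨hA, hB⟩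
    rw [h] at this
    exact sub_eq_zero.mp ((Submodule.mem_bot _).mp this)

/-- (Affine form, as in the paper's proof.) Let `X = Spec R` be a scheme that is
the scheme-theoretic union of two closed subschemes `A = Spec (R/I_A)` and `B = Spec (R/I_B)`
(i.e. `I_A ∩ I_B = 0`), and let `C = A ∩ B = Spec (R/(I_A+I_B))`. Then `X`, together with the
inclusions of `A` and `B`, is determined up to unique isomorphism by the data `C ⊆ A, B`:
namely, `R` is the inverse limit (fiber product) of `R/I_A → R/(I_A+I_B) ← R/I_B`, which is
expressed by the universal property below. -/
theorem stmt1 (R : Type*) [CommRing R] (IA IB : Ideal R) (h : IA ⊓ IB = ⊥) :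
    ∀ (T : Type*) [CommRing T] (a : T →+* R ⧸ IA) (b : T →+* R ⧸ IB),
      (Ideal.Quotient.factor (show IA ≤ IA + IB from le_sup_left)).comp a =
        (Ideal.Quotient.factor (show IB ≤ IA + IB from le_sup_right)).comp b →
      ∃! φ : T →+* R,
        (Ideal.Quotient.mk IA).comp φ = a ∧ (Ideal.Quotient.mk IB).comp φ = b := by
  intro T _ a b hab
  have key := key_aux R IA IB h T a b hab
  set f : T → R := fun t => (key t).choose with hf
  have hfa : ∀ t, Ideal.Quotient.mk IA (f t) = a t := fun t => (key t).choose_spec.1.1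
  have hfb : ∀ t, Ideal.Quotient.mk IB (f t) = b t := fun t => (key t).choose_spec.1.2
  have huniq : ∀ t r, Ideal.Quotient.mk IA r = a t → Ideal.Quotient.mk IB r = b t → r = f t :=
    fun t r h1 h2 => (key t).choose_spec.2 r ⟨h1, h2⟩
  refine ⟨{ toFun := f
            map_one' := (huniq 1 1 (by simp) (by simp)).symm
            map_mul' := fun s t => (huniq (s * t) (f s * f t)
              (by simp [hfa]) (by simp [hfb])).symm
            map_zero' := (huniq 0 0 (by simp) (by simp)).symm
            map_add' := fun s t => (huniq (s + t) (f s + f t)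
              (by simp [hfa]) (by simp [hfb])).symm }, ⟨?_, ?_⟩, ?_⟩
  · ext t; exact hfa t
  · ext t; exact hfb t
  · rintro ψ ⟨hψa, hψb⟩
    ext t
    exact huniq t (ψ t) (congrArg (fun g => g t) hψa) (congrArg (fun g => g t) hψb)
end

section
/- Suppose A ⊔ B → X' → X are maps of schemes where both composites A,B → X' and A,B → X are closed embeddings with scheme-theoretic union equal to X' and X respectively. Let C' = A ∩_{X'} B and C = A ∩_X B be the scheme-theoretic intersections. Then C' is a closed subscheme of C, and the map X' → X is an isomorphism if and only if the inclusion C' ↪ C is an isomorphism. -/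
/-- (Affine form: `X = Spec R`, `X' = Spec R'`, with `X' → X` corresponding to
`φ : R →+* R'`.) Suppose `A ⊔ B → X' → X` where `A, B` are closed subschemes of both `X'` and
`X` (cut out by ideals `IA', IB' ⊆ R'` and `IA, IB ⊆ R`, with `φ` inducing isomorphisms
`R/I_A ≅ R'/I_A'`, `R/I_B ≅ R'/I_B'`), and the scheme-theoretic unions are all of `X'` and `X`
(`IA' ⊓ IB' = 0`, `IA ⊓ IB = 0`).  Let `C' = A ∩_{X'} B` and `C = A ∩_X B`, cut out by
`IA' + IB'` and `IA + IB`.  Then `C'` is a closed subscheme of `C` (the induced map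
`R/(IA+IB) → R'/(IA'+IB')` is surjective), and `X' → X` is an isomorphism iff the inclusion
`C' ↪ C` is an isomorphism (iff that induced map is also injective, hence bijective). -/
theorem stmt2 (R R' : Type*) [CommRing R] [CommRing R'] (φ : R →+* R')
    (IA IB : Ideal R) (IA' IB' : Ideal R')
    (hA : Ideal.map φ IA = IA') (hB : Ideal.map φ IB = IB')
    (hAiso : Function.Bijective
      (Ideal.quotientMap IA' φ (hA ▸ Ideal.le_comap_map)))
    (hBiso : Function.Bijective
      (Ideal.quotientMap IB' φ (hB ▸ Ideal.le_comap_map)))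
    (hX : IA ⊓ IB = ⊥) (hX' : IA' ⊓ IB' = ⊥) :
    Function.Surjective
      (Ideal.quotientMap (IA' + IB') φ
        (sup_le ((hA ▸ Ideal.le_comap_map).trans (Ideal.comap_mono le_sup_left))
          ((hB ▸ Ideal.le_comap_map).trans (Ideal.comap_mono le_sup_right)))) ∧
    (Function.Bijective φ ↔
      Function.Bijective
        (Ideal.quotientMap (IA' + IB') φ
          (sup_le ((hA ▸ Ideal.le_comap_map).trans (Ideal.comap_mono le_sup_left))
            ((hB ▸ Ideal.le_comap_map).trans (Ideal.comap_mono le_sup_right))))) := by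
  subst hA hB
  set q := Ideal.quotientMap (Ideal.map φ IA + Ideal.map φ IB) φ
      (sup_le (Ideal.le_comap_map.trans (Ideal.comap_mono le_sup_left))
        (Ideal.le_comap_map.trans (Ideal.comap_mono le_sup_right))) with hq
  have hqmk : ∀ r : R, q (Ideal.Quotient.mk _ r) = Ideal.Quotient.mk _ (φ r) := by
    intro r; rw [hq, Ideal.quotientMap_mk]
  -- surjectivity of the map on intersections
  have hsurj : Function.Surjective q := by
    intro x'
    obtain ⟨r', rfl⟩ := Ideal.Quotient.mk_surjective x'
    obtain ⟨y, hy⟩ := hAiso.2 (Ideal.Quotient.mk _ r')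
    obtain ⟨a, rfl⟩ := Ideal.Quotient.mk_surjective y
    refine ⟨Ideal.Quotient.mk _ a, ?_⟩
    rw [Ideal.quotientMap_mk, Ideal.Quotient.eq] at hy
    rw [hqmk, Ideal.Quotient.eq]
    exact Ideal.mem_sup_left hy
  refine ⟨hsurj, ?_, ?_⟩
  · -- φ bijective → q bijective
    intro hφ
    refine ⟨?_, hsurj⟩
    have hcm : Ideal.comap φ (Ideal.map φ (IA ⊔ IB)) = IA ⊔ IB := by
      rw [Ideal.comap_map_of_surjective φ hφ.2,
        show Ideal.comap φ ⊥ = ⊥ from (RingHom.injective_iff_ker_eq_bot φ).mp hφ.1, sup_bot_eq]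
    intro x y h
    obtain ⟨r, rfl⟩ := Ideal.Quotient.mk_surjective x
    obtain ⟨s, rfl⟩ := Ideal.Quotient.mk_surjective y
    rw [hqmk, hqmk, Ideal.Quotient.eq] at h
    rw [Ideal.Quotient.eq]
    have : φ (r - s) ∈ Ideal.map φ (IA ⊔ IB) := by
      rw [Ideal.map_sup]; simpa using h
    have := hcm ▸ (Ideal.mem_comap.mpr this)
    simpa using this
  · -- q bijective → φ bijective
    intro hqb
    constructor
    · -- injective
      intro r s h
      have hrA : Ideal.Quotient.mk IA r = Ideal.Quotient.mk IA s := by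
        apply hAiso.1
        rw [Ideal.quotientMap_mk, Ideal.quotientMap_mk, h]
      have hrB : Ideal.Quotient.mk IB r = Ideal.Quotient.mk IB s := by
        apply hBiso.1
        rw [Ideal.quotientMap_mk, Ideal.quotientMap_mk, h]
      rw [Ideal.Quotient.eq] at hrA hrB
      have : r - s ∈ IA ⊓ IB := ⟨hrA, hrB⟩
      rw [hX] at this
      have : r - s = 0 := this
      linear_combination this
    · -- surjective
      intro r'
      obtain ⟨ya, hya⟩ := hAiso.2 (Ideal.Quotient.mk _ r')
      obtain ⟨a, rfl⟩ := Ideal.Quotient.mk_surjective ya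
      obtain ⟨yb, hyb⟩ := hBiso.2 (Ideal.Quotient.mk _ r')
      obtain ⟨b, rfl⟩ := Ideal.Quotient.mk_surjective yb
      rw [Ideal.quotientMap_mk, Ideal.Quotient.eq] at hya hyb
      -- φ (a - b) ∈ IA' + IB', so a - b ∈ IA + IB
      have hab : Ideal.Quotient.mk (IA ⊔ IB) (a - b) = 0 := by
        apply hqb.1
        rw [hqmk, map_zero, Ideal.Quotient.eq_zero_iff_mem]
        have : φ (a - b) = (φ a - r') - (φ b - r') := by push_cast [map_sub]; ring
        rw [this]
        exact Ideal.sub_mem _ (Ideal.mem_sup_left hya) (Ideal.mem_sup_right hyb)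
      rw [Ideal.Quotient.eq_zero_iff_mem] at hab
      obtain ⟨x, hx, y, hy, hxy⟩ := Submodule.mem_sup.mp hab
      refine ⟨a - x, ?_⟩
      have h1 : φ (a - x) - r' ∈ Ideal.map φ IA := by
        have : φ (a - x) - r' = (φ a - r') - φ x := by rw [map_sub]; ring
        rw [this]
        exact Ideal.sub_mem _ hya (Ideal.mem_map_of_mem φ hx)
      have h2 : φ (a - x) - r' ∈ Ideal.map φ IB := by
        have hax : a - x = b + y := by linear_combination -hxy
        have : φ (a - x) - r' = (φ b - r') + φ y := by rw [hax, map_add]; ring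
        rw [this]
        exact Ideal.add_mem _ hyb (Ideal.mem_map_of_mem φ hy)
      have : φ (a - x) - r' ∈ Ideal.map φ IA ⊓ Ideal.map φ IB := ⟨h1, h2⟩
      rw [hX'] at this
      have : φ (a - x) - r' = 0 := this
      linear_combination this
end

section
/- Let Q be a word in the simple reflections of a Coxeter group W and w ∈ W. Define the subword complex Δ(Q,w) to have as faces those subsets of (positions of) Q whose complement contains a reduced word for w as a subword. Then Δ(Q,w) is pure: all facets have the same cardinality, namely |Q| − ℓ(w), and the facets are exactly the complements of subwords of Q that are reduced words for w. -/
open List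

private lemma filter_mem_of_sublist {α : Type*} [DecidableEq α] :
    ∀ {J l : List α}, J.Sublist l → l.Nodup → l.filter (fun x => x ∈ J) = J := by
  intro J l h
  induction h with
  | slnil => simp
  | @cons l₁ l₂ a h ih =>
    intro hnd
    rw [List.nodup_cons] at hnd
    have haJ : a ∉ l₁ := fun hm => hnd.1 (h.subset hm)
    simp [List.filter_cons, haJ, ih hnd.2]
  | @cons_cons l₁ l₂ a h ih =>
    intro hnd
    rw [List.nodup_cons] at hnd
    have key : l₂.filter (fun x => x ∈ a :: l₁) = l₂.filter (fun x => x ∈ l₁) := by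
      apply List.filter_congr
      intro x hx
      simp only [List.mem_cons, decide_eq_decide]
      constructor
      · rintro (rfl | h')
        · exact absurd hx hnd.1
        · exact h'
      · exact Or.inr
    rw [List.filter_cons, if_pos (by simp), key, ih hnd.2]

private lemma length_filter_not_mem {n : ℕ} (S : Finset (Fin n)) :
    ((List.finRange n).filter (fun i => i ∉ S)).length = n - S.card := by
  have hnd : ((List.finRange n).filter (fun i => i ∉ S)).Nodup :=
    (List.nodup_finRange n).filter _
  have hts : ((List.finRange n).filter (fun i => i ∉ S)).toFinset = Sᶜ := by
    ext i; simp [List.mem_filter]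
  have := List.toFinset_card_of_nodup hnd
  rw [hts] at this
  rw [← this, Finset.card_compl, Fintype.card_fin]

/-- Let `Q` be a word in the simple reflections of a Coxeter group `W` and
`w ∈ W`, and assume `Q` contains a reduced word for `w` as a subword.  Define the subword
complex `Δ(Q,w)`: a subset `S` of positions of `Q` is a face iff the complementary subword of
`Q` contains a reduced word for `w`.  Then `Δ(Q,w)` is pure: the facets (maximal faces) are
exactly those `S` whose complementary subword is itself a reduced word for `w`, and every
facet has cardinality `|Q| - ℓ(w)`. -/
theorem stmt13 {B W : Type*} [Group W] {M : CoxeterMatrix B} (cs : CoxeterSystem M W)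
    (Q : List B) (w : W)
    (compList : Finset (Fin Q.length) → List B)
    (hcomp : ∀ S, compList S = ((List.finRange Q.length).filter (fun i => i ∉ S)).map Q.get)
    (Face : Finset (Fin Q.length) → Prop)
    (hFace : ∀ S, Face S ↔ ∃ ω : List B, ω.Sublist (compList S) ∧
      cs.IsReduced ω ∧ cs.wordProd ω = w)
    (hQ : Face ∅) :
    (∀ S, (Face S ∧ ∀ S', Face S' → S ⊆ S' → S' = S) ↔
      (cs.IsReduced (compList S) ∧ cs.wordProd (compList S) = w)) ∧
    (∀ S, (Face S ∧ ∀ S', Face S' → S ⊆ S' → S' = S) →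
      S.card = Q.length - cs.length w) := by
  have hlen : ∀ S : Finset (Fin Q.length), (compList S).length = Q.length - S.card := by
    intro S
    rw [hcomp S, List.length_map, length_filter_not_mem]
  have hmono : ∀ S S' : Finset (Fin Q.length), S ⊆ S' →
      (compList S').Sublist (compList S) := by
    intro S S' hss
    rw [hcomp S, hcomp S']
    apply List.Sublist.map
    apply List.monotone_filter_right
    intro a ha
    simp only [decide_eq_true_eq] at ha ⊢
    exact fun h => ha (hss h)
  -- main equivalence
  have main : ∀ S, (Face S ∧ ∀ S', Face S' → S ⊆ S' → S' = S) ↔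
      (cs.IsReduced (compList S) ∧ cs.wordProd (compList S) = w) := by
    intro S
    constructor
    · rintro ⟨hF, hmax⟩
      obtain ⟨ω, hsub, hred, hprod⟩ := (hFace S).mp hF
      -- ω is a sublist of compList S; lift to indices
      rw [hcomp S] at hsub
      obtain ⟨J, hJsub, rfl⟩ := List.sublist_map_iff.mp hsub
      have hJfin : J.Sublist (List.finRange Q.length) :=
        hJsub.trans List.filter_sublist
      set S' : Finset (Fin Q.length) := Finset.univ \ J.toFinset with hS'
      have hcomp' : compList S' = J.map Q.get := by
        rw [hcomp S']
        congr 1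
        have : (List.finRange Q.length).filter (fun i => i ∉ S') =
            (List.finRange Q.length).filter (fun i => i ∈ J) := by
          apply List.filter_congr
          intro x _
          simp [hS', List.mem_toFinset]
        rw [this]
        exact filter_mem_of_sublist hJfin (List.nodup_finRange _)
      have hFace' : Face S' := (hFace S').mpr ⟨J.map Q.get, by rw [hcomp'], hred, hprod⟩
      have hSS' : S ⊆ S' := by
        intro i hi
        simp only [hS', Finset.mem_sdiff, Finset.mem_univ, true_and, List.mem_toFinset]
        intro hiJ
        have := hJsub.subset hiJ
        rw [List.mem_filter] at this
        simp only [decide_eq_true_eq] at this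
        exact this.2 hi
      have : S' = S := hmax S' hFace' hSS'
      rw [← this, hcomp']
      exact ⟨hred, hprod⟩
    · rintro ⟨hred, hprod⟩
      have hF : Face S := (hFace S).mpr ⟨compList S, List.Sublist.refl _, hred, hprod⟩
      refine ⟨hF, ?_⟩
      intro S' hF' hss
      obtain ⟨ω', hsub', hred', hprod'⟩ := (hFace S').mp hF'
      have hlω' : ω'.length = cs.length w := by
        have := hred'; unfold CoxeterSystem.IsReduced at this; rw [hprod'] at this; omega
      have hlS : (compList S).length = cs.length w := by
        have := hred; unfold CoxeterSystem.IsReduced at this; rw [hprod] at this; omega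
      have h1 : ω'.length ≤ (compList S').length := hsub'.length_le
      have h2 : (compList S').length ≤ (compList S).length := (hmono S S' hss).length_le
      have hcard : S'.card ≤ S.card := by
        have hS := hlen S; have hS' := hlen S'
        have hcS : S.card ≤ Q.length := by
          simpa using Finset.card_le_card (Finset.subset_univ S)
        have hcS' : S'.card ≤ Q.length := by
          simpa using Finset.card_le_card (Finset.subset_univ S')
        omega
      exact (Finset.eq_of_subset_of_card_le hss hcard).symm
  refine ⟨main, fun S hS => ?_⟩
  obtain ⟨hred, hprod⟩ := (main S).mp hS
  have := hred; unfold CoxeterSystem.IsReduced at this; rw [hprod] at this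
  have hS := hlen S
  have hcS : S.card ≤ Q.length := by
    simpa using Finset.card_le_card (Finset.subset_univ S)
  omega
end
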